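/- arXiv:1804.08062 — 3 statements merged into one kernel-verified Lean document; each statement's English description precedes it below -/
import Mathlib

section
/- Let n ≥ 1 be a natural number and let α, F be real numbers with 0 < α ≤ 1 and 0 < F ≤ 1. Then ∑_{t=1}^{n} (α/n)·(1 − αF/n)^{t−1} ≥ 1 − (1 − α/n)^n, and moreover 1 − (1 − α/n)^n > 1 − e^{−α}. -/
theorem stmt_0 (n : ℕ) (hn : 1 ≤ n) (α F : ℝ)
    (hα0 : 0 < α) (hα1 : α ≤ 1) (hF0 : 0 < F) (hF1 : F ≤ 1) :
    (∑ t ∈ Finset.Icc 1 n, (α / n) * (1 - α * F / n) ^ (t - 1))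
      ≥ 1 - (1 - α / n) ^ n ∧
    1 - (1 - α / n) ^ n > 1 - Real.exp (-α) := by
  have hn' : (1:ℝ) ≤ (n:ℝ) := by exact_mod_cast hn
  have hnpos : (0:ℝ) < n := by linarith
  have hbase : 0 ≤ 1 - α / n := by
    have : α / n ≤ 1 := by
      rw [div_le_one hnpos]; linarith
    linarith
  constructor
  · have hreindex : (∑ t ∈ Finset.Icc 1 n, (α / n) * (1 - α * F / n) ^ (t - 1))
        = ∑ k ∈ Finset.range n, (α / n) * (1 - α * F / n) ^ k := by
      rw [show Finset.Icc 1 n = Finset.map ⟨fun k => k+1, fun a b h => by simpa using h⟩ (Finset.range n) from by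
        ext x
        simp only [Finset.mem_map, Finset.mem_range, Finset.mem_Icc,
          Function.Embedding.coeFn_mk]
        constructor
        · rintro ⟨h1, h2⟩
          exact ⟨x - 1, by omega, by show x - 1 + 1 = x; omega⟩
        · rintro ⟨a, ha, rfl⟩
          show 1 ≤ a + 1 ∧ a + 1 ≤ n; omega, Finset.sum_map]
      rfl
    rw [hreindex]
    have hgeom : (∑ k ∈ Finset.range n, (α / n) * (1 - α / n) ^ k)
        = 1 - (1 - α / n) ^ n := by
      have := geom_sum_mul (1 - α / n) n
      have h2 : (∑ k ∈ Finset.range n, (1 - α / n) ^ k) * (α / n)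
          = 1 - (1 - α / n) ^ n := by nlinarith [this]
      rw [← h2, Finset.sum_mul]
      exact Finset.sum_congr rfl (fun k _ => by ring)
    rw [← hgeom]
    apply Finset.sum_le_sum
    intro k _
    apply mul_le_mul_of_nonneg_left _ (by positivity)
    apply pow_le_pow_left₀ hbase
    have : α * F ≤ α := by nlinarith
    have : α * F / n ≤ α / n := by
      apply div_le_div_of_nonneg_right this (le_of_lt hnpos) |>.trans_eq rfl
    linarith
  · have hlt : 1 - α / n < Real.exp (-(α / n)) := by
      have := Real.add_one_lt_exp (x := -(α/n)) (by
        have : α / n > 0 := by positivity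
        intro h; rw [neg_eq_zero] at h; linarith)
      linarith
    have hpow : (1 - α / n) ^ n < (Real.exp (-(α / n))) ^ n := by
      apply pow_lt_pow_left₀ hlt hbase (by omega)
    have : (Real.exp (-(α / n))) ^ n = Real.exp (-α) := by
      rw [← Real.exp_nat_mul]
      congr 1
      field_simp
    linarith [hpow, this ▸ hpow]
end

section
/- Let γ^{(n)} be the sequence defined for each n ≥ 1 by γ^{(n)}_1 = 1 and γ^{(n)}_{t+1} = γ^{(n)}_t·(1 − (1 − γ^{(n)}_t/2)/n). Then the sums (1/n)·∑_{t=1}^{n} γ^{(n)}_t·(1 − γ^{(n)}_t/2) converge, as n → ∞, to 1 − 2/(1 + e) = (e − 1)/(e + 1). -/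
open Filter in
theorem stmt_10 (γ : ℕ → ℕ → ℝ)
    (hγ1 : ∀ n : ℕ, γ n 1 = 1)
    (hrec : ∀ n : ℕ, 1 ≤ n → ∀ t : ℕ, 1 ≤ t →
      γ n (t + 1) = γ n t * (1 - (1 - γ n t / 2) / n)) :
    Tendsto
      (fun n : ℕ => (1 / (n : ℝ)) * ∑ t ∈ Finset.Icc 1 n, γ n t * (1 - γ n t / 2))
      atTop (nhds (1 - 2 / (1 + Real.exp 1))) ∧
    1 - 2 / (1 + Real.exp 1) = (Real.exp 1 - 1) / (Real.exp 1 + 1) := by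
  have hexp : (0:ℝ) < Real.exp 1 := Real.exp_pos 1
  constructor
  · -- Key induction: bounds on v t = 2/γ n t - 1
    have key : ∀ n : ℕ, 2 ≤ n → ∀ t : ℕ, 1 ≤ t →
        0 < γ n t ∧ γ n t ≤ 1 ∧
          (1 + 1/(n:ℝ))^(t-1) ≤ 2/γ n t - 1 ∧
          2/γ n t - 1 ≤ (1 + 1/((n:ℝ)-1))^(t-1) := by
      intro n hn t ht
      have hn2 : (2:ℝ) ≤ (n:ℝ) := by exact_mod_cast hn
      have hnpos : (0:ℝ) < (n:ℝ) := by linarith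
      have hn1 : (0:ℝ) < (n:ℝ) - 1 := by linarith
      induction t, ht using Nat.le_induction with
      | base => norm_num [hγ1 n]
      | succ t ht IH =>
        obtain ⟨hpos, hle1, hlow, hup⟩ := IH
        set g := γ n t with hg
        have hrecc : γ n (t+1) = g * (1 - (1 - g/2)/(n:ℝ)) := hrec n (by omega) t ht
        have hfac : 0 < 1 - (1 - g/2)/(n:ℝ) := by
          have h1 : (1 - g/2)/(n:ℝ) < 1 := by
            rw [div_lt_one hnpos]; linarith
          linarith
        have hpos' : 0 < γ n (t+1) := by rw [hrecc]; exact mul_pos hpos hfac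
        have hle1' : γ n (t+1) ≤ 1 := by
          rw [hrecc]
          have h1 : 1 - (1 - g/2)/(n:ℝ) ≤ 1 := by
            have : 0 ≤ (1 - g/2)/(n:ℝ) := div_nonneg (by linarith) hnpos.le
            linarith
          nlinarith
        have hdpos : (0:ℝ) < 2*(n:ℝ) - 2 + g := by linarith
        have hgne : g ≠ 0 := ne_of_gt hpos
        have hnne : (n:ℝ) ≠ 0 := ne_of_gt hnpos
        -- the key algebraic identity
        have e1 : 2 / (g * (1 - (1 - g/2)/(n:ℝ))) - 1
            = (2/g - 1) * ((2*(n:ℝ) + g)/(2*(n:ℝ) - 2 + g)) := by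
          have hf : 1 - (1-g/2)/(n:ℝ) = (2*(n:ℝ)-2+g)/(2*(n:ℝ)) := by field_simp; ring
          rw [hf, mul_div_assoc', div_div_eq_mul_div]
          field_simp
          ring
        have hr1 : 1 + 1/(n:ℝ) ≤ (2*(n:ℝ) + g)/(2*(n:ℝ) - 2 + g) := by
          rw [show (1:ℝ) + 1/(n:ℝ) = ((n:ℝ)+1)/(n:ℝ) by field_simp,
            div_le_div_iff₀ hnpos hdpos]
          nlinarith
        have hr2 : (2*(n:ℝ) + g)/(2*(n:ℝ) - 2 + g) ≤ 1 + 1/((n:ℝ)-1) := by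
          rw [show (1:ℝ) + 1/((n:ℝ)-1) = (n:ℝ)/((n:ℝ)-1) by field_simp; ring,
            div_le_div_iff₀ hdpos hn1]
          nlinarith
        have hv1 : (1:ℝ) ≤ 2/g - 1 :=
          le_trans (one_le_pow₀ (by
            have h0 : (0:ℝ) ≤ 1/(n:ℝ) := by positivity
            linarith)) hlow
        have hpw1 : (1 + 1/(n:ℝ))^t = (1 + 1/(n:ℝ))^(t-1) * (1 + 1/(n:ℝ)) := by
          rw [← pow_succ, Nat.sub_add_cancel ht]
        have hpw2 : (1 + 1/((n:ℝ)-1))^t = (1 + 1/((n:ℝ)-1))^(t-1) * (1 + 1/((n:ℝ)-1)) := by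
          rw [← pow_succ, Nat.sub_add_cancel ht]
        refine ⟨hpos', hle1', ?_, ?_⟩
        · rw [Nat.add_sub_cancel, hpw1, hrecc, e1]
          exact mul_le_mul hlow hr1 (by positivity) (by linarith)
        · rw [Nat.add_sub_cancel, hpw2, hrecc, e1]
          have hrnn : 0 ≤ (2*(n:ℝ) + g)/(2*(n:ℝ) - 2 + g) := by positivity
          exact mul_le_mul hup hr2 hrnn (by positivity)
    -- Telescoping sum
    have hsum : ∀ n : ℕ, 1 ≤ n →
        (1/(n:ℝ)) * ∑ t ∈ Finset.Icc 1 n, γ n t * (1 - γ n t / 2) = 1 - γ n (n+1) := by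
      intro n hn
      have hnne : (n:ℝ) ≠ 0 := Nat.cast_ne_zero.mpr (by omega)
      have hterm : ∀ t ∈ Finset.Icc 1 n, γ n t * (1 - γ n t / 2)
          = (n:ℝ) * (γ n t - γ n (t+1)) := by
        intro t htm
        rw [hrec n hn t (Finset.mem_Icc.mp htm).1]
        field_simp
        ring
      rw [Finset.sum_congr rfl hterm, ← Finset.mul_sum]
      have tele : ∀ (f : ℕ → ℝ) (m : ℕ),
          ∑ t ∈ Finset.Icc 1 m, (f t - f (t+1)) = f 1 - f (m+1) := by
        intro f m
        induction m with
        | zero => simp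
        | succ k ih => rw [Finset.sum_Icc_succ_top (by omega), ih]; ring
      have htel := tele (γ n) n
      rw [htel, hγ1, ← mul_assoc, one_div, inv_mul_cancel₀ hnne, one_mul]
    -- Limit of v n = 2/γ n (n+1) - 1
    have hlowten : Tendsto (fun n : ℕ => (1 + 1/(n:ℝ))^n) atTop (nhds (Real.exp 1)) := by
      simpa using Real.tendsto_one_add_div_pow_exp 1
    have hone : Tendsto (fun n : ℕ => 1 + 1/(n:ℝ)) atTop (nhds 1) := by
      simpa using (tendsto_const_nhds (x := (1:ℝ))).add tendsto_one_div_atTop_nhds_zero_nat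
    have hupten : Tendsto (fun n : ℕ => (1 + 1/((n:ℝ)-1))^n) atTop (nhds (Real.exp 1)) := by
      have h1 : Tendsto (fun m : ℕ => (1 + 1/(m:ℝ))^m * (1 + 1/(m:ℝ)))
          atTop (nhds (Real.exp 1)) := by
        simpa using hlowten.mul hone
      have h2 := h1.comp (tendsto_sub_atTop_nat 1)
      refine Tendsto.congr' ?_ h2
      filter_upwards [eventually_ge_atTop 2] with n hn
      have hc : ((n - 1 : ℕ) : ℝ) = (n:ℝ) - 1 := by
        have : (1:ℕ) ≤ n := by omega
        push_cast [Nat.cast_sub this]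
        ring
      simp only [Function.comp_apply, hc]
      rw [← pow_succ, show n - 1 + 1 = n from by omega]
    have hvten : Tendsto (fun n : ℕ => 2/γ n (n+1) - 1) atTop (nhds (Real.exp 1)) := by
      apply tendsto_of_tendsto_of_tendsto_of_le_of_le' hlowten hupten
      · filter_upwards [eventually_ge_atTop 2] with n hn
        have h := (key n hn (n+1) (by omega)).2.2.1
        simpa using h
      · filter_upwards [eventually_ge_atTop 2] with n hn
        have h := (key n hn (n+1) (by omega)).2.2.2
        simpa using h
    have hγten : Tendsto (fun n : ℕ => γ n (n+1)) atTop (nhds (2/(1+Real.exp 1))) := by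
      have h1 : Tendsto (fun n : ℕ => 2/(1 + (2/γ n (n+1) - 1)))
          atTop (nhds (2/(1+Real.exp 1))) :=
        tendsto_const_nhds.div (tendsto_const_nhds.add hvten) (by positivity)
      refine Tendsto.congr' ?_ h1
      filter_upwards [eventually_ge_atTop 2] with n hn
      have hpos := (key n hn (n+1) (by omega)).1
      rw [show (1:ℝ) + (2/γ n (n+1) - 1) = 2/γ n (n+1) by ring]
      rw [div_div_eq_mul_div]
      ring
    refine Tendsto.congr' ?_ (tendsto_const_nhds.sub hγten)
    filter_upwards [eventually_ge_atTop 1] with n hn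
    exact (hsum n hn).symm
  · have h : (1:ℝ) + Real.exp 1 ≠ 0 := by positivity
    have h2 : Real.exp 1 + 1 ≠ 0 := by positivity
    field_simp
    ring
end

section
/- Let β, ε, μ, μ̂ be real numbers with 0 < β ≤ 1, 0 < ε ≤ β/2, ε < 1, μ ≥ β − ε, and |μ̂ − μ| ≤ ε·μ. Define σ = β/μ̂ if μ̂ ≥ β and σ = 1 otherwise. Then β − ε ≤ σ·μ ≤ β/(1 − ε). -/
theorem stmt_17 (β ε μ μhat : ℝ)
    (hβ0 : 0 < β) (hβ1 : β ≤ 1) (hε0 : 0 < ε) (hεβ : ε ≤ β / 2) (hε1 : ε < 1)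
    (hμ : μ ≥ β - ε) (hest : |μhat - μ| ≤ ε * μ)
    (σ : ℝ) (hσ : σ = if μhat ≥ β then β / μhat else 1) :
    β - ε ≤ σ * μ ∧ σ * μ ≤ β / (1 - ε) := by
  have hμ0 : 0 < μ := by nlinarith
  have h1e : 0 < 1 - ε := by linarith
  have habs := abs_le.mp hest
  have hlo : (1 - ε) * μ ≤ μhat := by nlinarith [habs.1]
  have hhi : μhat ≤ (1 + ε) * μ := by nlinarith [habs.2]
  subst hσ
  by_cases h : μhat ≥ β
  · simp only [h, if_true]
    have hμhat0 : 0 < μhat := lt_of_lt_of_le hβ0 h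
    constructor
    · rw [div_mul_eq_mul_div, le_div_iff₀ hμhat0]
      nlinarith
    · rw [div_mul_eq_mul_div, div_le_div_iff₀ hμhat0 h1e]
      nlinarith
  · simp only [h, if_false]
    push_neg at h
    constructor
    · linarith
    · rw [one_mul, le_div_iff₀ h1e]
      nlinarith
end
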